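/- Let A_1, …, A_{m−1} be a skew Clifford system on ℝ^{n+1} and let F(x,y) = ⟨x,y⟩² + Σ_{q=1}^{m−1} ⟨A_q x, y⟩². For x, y ∈ ℝ^{n+1} with ‖x‖ = ‖y‖ = 1, the two components of the tangential gradient of F have equal length: ‖(∂F/∂x)(x,y) − 2F(x,y)·x‖² = ‖(∂F/∂y)(x,y) − 2F(x,y)·y‖² = 4F(x,y)(1 − F(x,y)). (This says every regular level set of F in S^n × S^n is an isonormal hypersurface, i.e. Urbano's angle function C = ⟨PN, N⟩ vanishes identically on it.) -/

import Mathlib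

open Matrix
open scoped RealInnerProductSpace BigOperators

noncomputable section

/-- A skew Clifford system `A_1, …, A_{m-1}` on `ℝ^N`: skew-symmetric matrices with
`A_p A_q + A_q A_p = -2 δ_{pq} Id`. -/
def IsSkewCliffordSystem {N m : ℕ} (A : Fin (m - 1) → Matrix (Fin N) (Fin N) ℝ) : Prop :=
  (∀ p q, A p * A q + A q * A p =
      if p = q then (-2 : ℝ) • (1 : Matrix (Fin N) (Fin N) ℝ) else 0) ∧
  (∀ p, (A p)ᵀ = -A p)

/-- The action of a matrix on Euclidean space. -/
def act {N : ℕ} (A : Matrix (Fin N) (Fin N) ℝ) (x : EuclideanSpace ℝ (Fin N)) :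
    EuclideanSpace ℝ (Fin N) :=
  Matrix.toEuclideanLin A x

/-- The splitting form of the FKM isoparametric polynomial:
`F(x,y) = ⟨x,y⟩² + Σ_q ⟨A_q x, y⟩²`. -/
def FKM {N m : ℕ} (A : Fin (m - 1) → Matrix (Fin N) (Fin N) ℝ)
    (x y : EuclideanSpace ℝ (Fin N)) : ℝ :=
  ⟪x, y⟫ ^ 2 + ∑ q, ⟪act (A q) x, y⟫ ^ 2

section helpers

variable {N : ℕ}

lemma act_mul (B C : Matrix (Fin N) (Fin N) ℝ) (u : EuclideanSpace ℝ (Fin N)) :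
    act (B * C) u = act B (act C u) := by
  simp [act, Matrix.toEuclideanLin_apply, ← Matrix.mulVec_mulVec]

lemma act_neg (B : Matrix (Fin N) (Fin N) ℝ) (u : EuclideanSpace ℝ (Fin N)) :
    act (-B) u = -(act B u) := by
  simp [act]

lemma act_add (B C : Matrix (Fin N) (Fin N) ℝ) (u : EuclideanSpace ℝ (Fin N)) :
    act (B + C) u = act B u + act C u := by
  simp [act]

lemma act_smul (r : ℝ) (B : Matrix (Fin N) (Fin N) ℝ) (u : EuclideanSpace ℝ (Fin N)) :
    act (r • B) u = r • (act B u) := by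
  simp [act]

lemma act_one (u : EuclideanSpace ℝ (Fin N)) : act (1 : Matrix (Fin N) (Fin N) ℝ) u = u := by
  simp [act, Matrix.toEuclideanLin_apply, Matrix.one_mulVec]

lemma act_zero (u : EuclideanSpace ℝ (Fin N)) : act (0 : Matrix (Fin N) (Fin N) ℝ) u = 0 := by
  simp [act]

lemma inner_act (B : Matrix (Fin N) (Fin N) ℝ) (u v : EuclideanSpace ℝ (Fin N)) :
    ⟪act B u, v⟫ = ⟪u, act Bᵀ v⟫ := by
  have h : Bᵀ = Bᴴ := by
    ext i j; simp [Matrix.conjTranspose]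
  rw [h]
  have := Matrix.toEuclideanLin_conjTranspose_eq_adjoint (𝕜 := ℝ) B
  simp only [act, this]
  rw [LinearMap.adjoint_inner_right]

lemma inner_act_self_skew {B : Matrix (Fin N) (Fin N) ℝ} (hB : Bᵀ = -B)
    (u : EuclideanSpace ℝ (Fin N)) : ⟪u, act B u⟫ = 0 := by
  have h1 : ⟪act B u, u⟫ = ⟪u, act Bᵀ u⟫ := inner_act B u u
  rw [hB, act_neg, inner_neg_right, real_inner_comm] at h1
  linarith

lemma inner_act_act {m : ℕ} {A : Fin (m - 1) → Matrix (Fin N) (Fin N) ℝ}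
    (hA : IsSkewCliffordSystem A) (u : EuclideanSpace ℝ (Fin N)) (p q : Fin (m - 1)) :
    ⟪act (A p) u, act (A q) u⟫ = if p = q then ⟪u, u⟫ else 0 := by
  have h1 : ⟪act (A p) u, act (A q) u⟫ = -⟪u, act (A p * A q) u⟫ := by
    rw [inner_act, hA.2 p, act_mul, act_neg, inner_neg_right]
  have h2 : ⟪act (A q) u, act (A p) u⟫ = -⟪u, act (A q * A p) u⟫ := by
    rw [inner_act, hA.2 q, act_mul, act_neg, inner_neg_right]
  have h3 : ⟪act (A p) u, act (A q) u⟫ = ⟪act (A q) u, act (A p) u⟫ := real_inner_comm _ _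
  have h4 : ⟪u, act (A p * A q) u⟫ + ⟪u, act (A q * A p) u⟫
      = ⟪u, act (A p * A q + A q * A p) u⟫ := by
    rw [act_add, inner_add_right]
  rw [hA.1 p q] at h4
  by_cases hpq : p = q
  · subst hpq
    rw [if_pos rfl] at h4 ⊢
    rw [act_smul, act_one, real_inner_smul_right] at h4
    linarith
  · simp only [if_neg hpq] at h4 ⊢
    rw [act_zero, inner_zero_right] at h4
    linarith [h1, h2, h3]

lemma hasGradientAt_inner_sq (w x : EuclideanSpace ℝ (Fin N)) :
    HasGradientAt (fun x' => ⟪w, x'⟫ ^ 2) ((2 * ⟪w, x⟫) • w) x := by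
  rw [hasGradientAt_iff_hasFDerivAt]
  have hfun : (fun x' : EuclideanSpace ℝ (Fin N) => ⟪w, x'⟫ ^ 2)
      = fun x' => (innerSL ℝ w) x' * (innerSL ℝ w) x' := by
    funext x'; simp [sq]
  rw [hfun]
  have hD : (InnerProductSpace.toDual ℝ (EuclideanSpace ℝ (Fin N))) ((2 * ⟪w, x⟫) • w)
      = (innerSL ℝ w) x • (innerSL ℝ w) + (innerSL ℝ w) x • (innerSL ℝ w) := by
    ext v
    simp [InnerProductSpace.toDual_apply_apply, real_inner_smul_left]
    ring
  rw [hD]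
  exact ((innerSL ℝ w).hasFDerivAt).mul ((innerSL ℝ w).hasFDerivAt)

lemma hasGradientAt_sum_sq {k : ℕ} (w0 : EuclideanSpace ℝ (Fin N))
    (w : Fin k → EuclideanSpace ℝ (Fin N)) (x : EuclideanSpace ℝ (Fin N)) :
    HasGradientAt (fun x' => ⟪w0, x'⟫ ^ 2 + ∑ q, ⟪w q, x'⟫ ^ 2)
      ((2 * ⟪w0, x⟫) • w0 + ∑ q, (2 * ⟪w q, x⟫) • (w q)) x := by
  rw [hasGradientAt_iff_hasFDerivAt, map_add, map_sum]
  exact ((hasGradientAt_inner_sq w0 x).hasFDerivAt).add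
    (HasFDerivAt.fun_sum fun q _ => (hasGradientAt_inner_sq (w q) x).hasFDerivAt)

lemma isonormal_calc {k : ℕ} {E : Type*} [NormedAddCommGroup E] [InnerProductSpace ℝ E]
    (u v : E) (z : Fin k → E) (c0 : ℝ) (c : Fin k → ℝ)
    (huu : ⟪u, u⟫ = 1) (hvv : ⟪v, v⟫ = 1)
    (hvz : ∀ q, ⟪v, z q⟫ = 0)
    (hzz : ∀ p q, ⟪z p, z q⟫ = if p = q then 1 else 0)
    (hzu : ∀ q, ⟪z q, u⟫ = c q)
    (hvu : ⟪v, u⟫ = c0) :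
    ‖((2 * c0) • v + ∑ q, (2 * c q) • z q) - (2 * (c0 ^ 2 + ∑ q, c q ^ 2)) • u‖ ^ 2
      = 4 * (c0 ^ 2 + ∑ q, c q ^ 2) * (1 - (c0 ^ 2 + ∑ q, c q ^ 2)) := by
  set F := c0 ^ 2 + ∑ q, c q ^ 2 with hF
  set s : E := ∑ q, (2 * c q) • z q with hs
  have hvs : ⟪v, s⟫ = 0 := by
    rw [hs, inner_sum]
    simp [real_inner_smul_right, hvz]
  have hss : ⟪s, s⟫ = 4 * ∑ q, c q ^ 2 := by
    rw [hs, sum_inner]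
    have : ∀ p, ⟪(2 * c p) • z p, ∑ q, (2 * c q) • z q⟫ = 4 * c p ^ 2 := by
      intro p
      rw [inner_sum]
      simp only [real_inner_smul_left, real_inner_smul_right, hzz, mul_ite, mul_one, mul_zero,
        Finset.sum_ite_eq, Finset.mem_univ, if_true]
      ring
    rw [Finset.sum_congr rfl fun p _ => this p, Finset.mul_sum]
  have hsu : ⟪s, u⟫ = 2 * ∑ q, c q ^ 2 := by
    rw [hs, sum_inner]
    simp only [real_inner_smul_left, hzu]
    rw [Finset.mul_sum]
    exact Finset.sum_congr rfl fun q _ => by ring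
  have hgg : ⟪(2 * c0) • v + s, (2 * c0) • v + s⟫ = 4 * F := by
    rw [real_inner_add_add_self, real_inner_smul_left, real_inner_smul_right,
      real_inner_smul_left, hvv, hvs, hss, hF]
    ring
  have hgu : ⟪(2 * c0) • v + s, u⟫ = 2 * F := by
    rw [inner_add_left, real_inner_smul_left, hvu, hsu, hF]
    ring
  have key : ⟪((2 * c0) • v + s) - (2 * F) • u, ((2 * c0) • v + s) - (2 * F) • u⟫
      = 4 * F * (1 - F) := by
    rw [real_inner_sub_sub_self, real_inner_smul_left, real_inner_smul_right,
      real_inner_smul_right, hgg, hgu, huu]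
    ring
  rw [← real_inner_self_eq_norm_sq]
  exact key

end helpers

/-- for `‖x‖ = ‖y‖ = 1`, the two components of the tangential gradient of
`F` have equal length: `‖∂F/∂x − 2F x‖² = ‖∂F/∂y − 2F y‖² = 4F(1 − F)`, where `∂F/∂x`,
`∂F/∂y` are the gradients of `F` in the `x`- and `y`-variables.  (Every regular level
set of `F` in `S^n × S^n` is an isonormal hypersurface.) -/
theorem stmt6 (n m : ℕ) (hn : 1 ≤ n) (hm : 1 ≤ m)
    (A : Fin (m - 1) → Matrix (Fin (n + 1)) (Fin (n + 1)) ℝ)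
    (hA : IsSkewCliffordSystem A)
    (x y : EuclideanSpace ℝ (Fin (n + 1))) (hx : ‖x‖ = 1) (hy : ‖y‖ = 1) :
    ‖gradient (fun x' => FKM A x' y) x - (2 * FKM A x y) • x‖ ^ 2 =
        4 * FKM A x y * (1 - FKM A x y) ∧
    ‖gradient (fun y' => FKM A x y') y - (2 * FKM A x y) • y‖ ^ 2 =
        4 * FKM A x y * (1 - FKM A x y) := by
  have hxx : ⟪x, x⟫ = 1 := by rw [real_inner_self_eq_norm_sq, hx]; norm_num
  have hyy : ⟪y, y⟫ = 1 := by rw [real_inner_self_eq_norm_sq, hy]; norm_num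
  set c0 : ℝ := ⟪x, y⟫ with hc0
  set c : Fin (m - 1) → ℝ := fun q => ⟪act (A q) x, y⟫ with hc
  have hFKM : FKM A x y = c0 ^ 2 + ∑ q, c q ^ 2 := rfl
  constructor
  · -- gradient in x
    have hfun : (fun x' => FKM A x' y)
        = fun x' => ⟪y, x'⟫ ^ 2 + ∑ q, ⟪act (A q)ᵀ y, x'⟫ ^ 2 := by
      funext x'
      simp only [FKM]
      congr 1
      · rw [real_inner_comm]
      · exact Finset.sum_congr rfl fun q _ => by rw [inner_act, real_inner_comm]
    have hgrad : gradient (fun x' => FKM A x' y) x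
        = (2 * ⟪y, x⟫) • y + ∑ q, (2 * ⟪act (A q)ᵀ y, x⟫) • (act (A q)ᵀ y) := by
      apply HasGradientAt.gradient
      rw [hfun]
      exact hasGradientAt_sum_sq y (fun q => act (A q)ᵀ y) x
    have hcoef : ∀ q, ⟪act (A q)ᵀ y, x⟫ = c q := by
      intro q
      rw [inner_act, Matrix.transpose_transpose, real_inner_comm]
    have hzneg : ∀ q : Fin (m - 1), act (A q)ᵀ y = -(act (A q) y) := by
      intro q; rw [hA.2 q, act_neg]
    have hyx : ⟪y, x⟫ = c0 := real_inner_comm x y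
    rw [hgrad, hyx, Finset.sum_congr rfl fun q _ => by rw [hcoef q], hFKM]
    apply isonormal_calc x y (fun q => act (A q)ᵀ y) c0 c hxx hyy
    · intro q
      rw [hzneg q, inner_neg_right, inner_act_self_skew (hA.2 q) y, neg_zero]
    · intro p q
      rw [hzneg p, hzneg q, inner_neg_neg, inner_act_act hA y p q, hyy]
    · exact hcoef
    · exact hyx
  · -- gradient in y
    have hgrad : gradient (fun y' => FKM A x y') y
        = (2 * ⟪x, y⟫) • x + ∑ q, (2 * ⟪act (A q) x, y⟫) • (act (A q) x) := by
      apply HasGradientAt.gradient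
      exact hasGradientAt_sum_sq x (fun q => act (A q) x) y
    rw [hgrad, hFKM]
    apply isonormal_calc y x (fun q => act (A q) x) c0 c hyy hxx
    · intro q
      exact inner_act_self_skew (hA.2 q) x
    · intro p q
      rw [inner_act_act hA x p q, hxx]
    · intro q; rfl
    · rfl
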